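/- Let W be a Hermitian operator on ℂ^d that is not a real scalar multiple of the identity, and let ρ be a positive-definite density matrix on ℂ^d such that ρ ≠ e^{−βW}/Tr(e^{−βW}) for every β ≥ 0. Then there exist m ≥ 1 and a unitary U on (ℂ^d)^{⊗m} such that Tr(U ρ^{⊗m} U† W̄_m) < Tr(ρ^{⊗m} W̄_m), where W̄_m := Σ_{ℓ=0}^{m−1} I^{⊗ℓ} ⊗ W ⊗ I^{⊗(m−1−ℓ)}. That is, a nonzero amount of chemical work can be extracted from sufficiently many copies of any full-rank state that is not a thermal state of the payoff function W. -/

import Mathlib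

open Matrix BigOperators
open scoped ComplexOrder

/-- Functional calculus for a Hermitian matrix: apply `f` to the eigenvalues.
(Returns `0` if the matrix is not Hermitian.) -/
noncomputable def matFun {n : Type*} [Fintype n] [DecidableEq n]
    (f : ℝ → ℝ) (A : Matrix n n ℂ) : Matrix n n ℂ :=
  if hA : A.IsHermitian then
    (hA.eigenvectorUnitary : Matrix n n ℂ) *
      Matrix.diagonal (fun i => (f (hA.eigenvalues i) : ℂ)) *
      (star hA.eigenvectorUnitary : Matrix n n ℂ)
  else 0

/-- Spectral projector of a Hermitian matrix onto the direct sum of the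
eigenspaces with eigenvalue in the closed interval `[a, b]`. -/
noncomputable def specProj {n : Type*} [Fintype n] [DecidableEq n]
    (A : Matrix n n ℂ) (a b : ℝ) : Matrix n n ℂ :=
  matFun (Set.indicator (Set.Icc a b) fun _ => (1 : ℝ)) A

/-- Largest eigenvalue of a Hermitian matrix. -/
noncomputable def eigMax {n : Type*} [Fintype n] [DecidableEq n]
    (A : Matrix n n ℂ) : ℝ :=
  if hA : A.IsHermitian then ⨆ i, hA.eigenvalues i else 0

/-- Smallest eigenvalue of a Hermitian matrix. -/
noncomputable def eigMin {n : Type*} [Fintype n] [DecidableEq n]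
    (A : Matrix n n ℂ) : ℝ :=
  if hA : A.IsHermitian then ⨅ i, hA.eigenvalues i else 0

/-- Spectral diameter `Σ(A) = λ_max(A) - λ_min(A)` of a Hermitian matrix. -/
noncomputable def specDiam {n : Type*} [Fintype n] [DecidableEq n]
    (A : Matrix n n ℂ) : ℝ :=
  eigMax A - eigMin A

/-- Operator norm `‖A‖_∞` of a Hermitian matrix: the largest absolute value
of an eigenvalue. -/
noncomputable def opNorm {n : Type*} [Fintype n] [DecidableEq n]
    (A : Matrix n n ℂ) : ℝ :=
  if hA : A.IsHermitian then ⨆ i, |hA.eigenvalues i| else 0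

/-- The single-site operator `I^{⊗ℓ} ⊗ Q ⊗ I^{⊗(N-1-ℓ)}` on `(ℂ^d)^{⊗N}`. -/
noncomputable def siteOp {d : ℕ} (Q : Matrix (Fin d) (Fin d) ℂ) (N : ℕ) (ℓ : Fin N) :
    Matrix (Fin N → Fin d) (Fin N → Fin d) ℂ :=
  Matrix.of fun x y =>
    (∏ k ∈ Finset.univ.erase ℓ, if x k = y k then (1 : ℂ) else 0) * Q (x ℓ) (y ℓ)

/-- The average operator `Q̄ := (1/N) Σ_ℓ I^{⊗ℓ} ⊗ Q ⊗ I^{⊗(N-1-ℓ)}` on `(ℂ^d)^{⊗N}`. -/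
noncomputable def avgOp {d : ℕ} (Q : Matrix (Fin d) (Fin d) ℂ) (N : ℕ) :
    Matrix (Fin N → Fin d) (Fin N → Fin d) ℂ :=
  (N : ℂ)⁻¹ • ∑ ℓ : Fin N, siteOp Q N ℓ

/-- The `N`-fold tensor power `ρ^{⊗N}` on `(ℂ^d)^{⊗N}`. -/
noncomputable def tensorPow {d : ℕ} (ρ : Matrix (Fin d) (Fin d) ℂ) (N : ℕ) :
    Matrix (Fin N → Fin d) (Fin N → Fin d) ℂ :=
  Matrix.of fun x y => ∏ ℓ, ρ (x ℓ) (y ℓ)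

/-- The reduced state on the `ℓ`-th tensor factor: partial trace over all
tensor factors except the `ℓ`-th. -/
noncomputable def reduceAt {d N : ℕ}
    (Ω : Matrix (Fin N → Fin d) (Fin N → Fin d) ℂ) (ℓ : Fin N) :
    Matrix (Fin d) (Fin d) ℂ :=
  Matrix.of fun a b =>
    ∑ x ∈ Finset.univ.filter (fun x : Fin N → Fin d => x ℓ = a),
      Ω x (Function.update x ℓ b)

/-- Quantum relative entropy `D(ρ‖σ) = Tr(ρ (log ρ - log σ))`, with the
convention `log 0 = 0` (so `0 log 0 = 0` on the kernel of `ρ`). -/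
noncomputable def relEnt {n : Type*} [Fintype n] [DecidableEq n]
    (ρ σ : Matrix n n ℂ) : ℝ :=
  (Matrix.trace (ρ * (matFun Real.log ρ - matFun Real.log σ))).re

/-- Trace norm `‖A‖₁ = Tr √(AᴴA)`. -/
noncomputable def traceNorm {n : Type*} [Fintype n] [DecidableEq n]
    (A : Matrix n n ℂ) : ℝ :=
  (Matrix.trace
    ((Matrix.posSemidef_conjTranspose_mul_self A).1.eigenvectorUnitary.1 *
      Matrix.diagonal (((↑) : ℝ → ℂ) ∘ Real.sqrt ∘ (Matrix.posSemidef_conjTranspose_mul_self A).1.eigenvalues) *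
      (star (Matrix.posSemidef_conjTranspose_mul_self A).1.eigenvectorUnitary : Matrix n n ℂ))).re

/-- Matrix exponential, defined by the power series. -/
noncomputable def matExp {n : Type*} [Fintype n] [DecidableEq n]
    (A : Matrix n n ℂ) : Matrix n n ℂ :=
  ∑' k : ℕ, ((k.factorial : ℂ)⁻¹) • A ^ k

section GenOp
variable {d m : ℕ}

/-- elementary tensor of matrices -/
noncomputable def genOp (f : Fin m → Matrix (Fin d) (Fin d) ℂ) :
    Matrix (Fin m → Fin d) (Fin m → Fin d) ℂ :=
  Matrix.of fun x y => ∏ k, f k (x k) (y k)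

lemma genOp_mul (f g : Fin m → Matrix (Fin d) (Fin d) ℂ) :
    genOp f * genOp g = genOp (fun k => f k * g k) := by
  ext x y
  simp only [genOp, Matrix.mul_apply, Matrix.of_apply]
  rw [Fintype.prod_sum (fun k j => f k (x k) j * g k j (y k))]
  exact Finset.sum_congr rfl fun z _ => (Finset.prod_mul_distrib).symm

lemma genOp_conjTranspose (f : Fin m → Matrix (Fin d) (Fin d) ℂ) :
    (genOp f)ᴴ = genOp (fun k => (f k)ᴴ) := by
  ext x y
  simp only [genOp, Matrix.conjTranspose_apply, Matrix.of_apply]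
  exact star_prod _ _

lemma prod_ite_eq_ite (x y : Fin m → Fin d) :
    (∏ k, if x k = y k then (1 : ℂ) else 0) = if x = y then 1 else 0 := by
  by_cases h : x = y
  · subst h; simp
  · obtain ⟨k, hk⟩ := Function.ne_iff.mp h
    rw [if_neg h]
    exact Finset.prod_eq_zero (Finset.mem_univ k) (by simp [hk])

lemma genOp_one : genOp (fun _ : Fin m => (1 : Matrix (Fin d) (Fin d) ℂ)) = 1 := by
  ext x y
  simp only [genOp, Matrix.of_apply, Matrix.one_apply]
  exact prod_ite_eq_ite x y

lemma genOp_diagonal (v : Fin m → Fin d → ℂ) :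
    genOp (fun k => diagonal (v k)) = diagonal (fun x => ∏ k, v k (x k)) := by
  ext x y
  simp only [genOp, Matrix.of_apply]
  by_cases h : x = y
  · subst h; simp [diagonal_apply_eq]
  · rw [diagonal_apply_ne _ h]
    obtain ⟨k, hk⟩ := Function.ne_iff.mp h
    exact Finset.prod_eq_zero (Finset.mem_univ k) (diagonal_apply_ne _ hk)

lemma genOp_const_mem_unitary {A : Matrix (Fin d) (Fin d) ℂ}
    (hA : A ∈ Matrix.unitaryGroup (Fin d) ℂ) :
    genOp (fun _ : Fin m => A) ∈ Matrix.unitaryGroup (Fin m → Fin d) ℂ := by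
  rw [Matrix.mem_unitaryGroup_iff]
  rw [Matrix.star_eq_conjTranspose, genOp_conjTranspose, genOp_mul]
  have : (fun k : Fin m => A * Aᴴ) = fun _ => (1 : Matrix (Fin d) (Fin d) ℂ) := by
    funext k
    rw [← Matrix.star_eq_conjTranspose]
    exact Matrix.mem_unitaryGroup_iff.mp hA
  rw [this, genOp_one]

lemma tensorPow_eq_genOp (ρ : Matrix (Fin d) (Fin d) ℂ) (m : ℕ) :
    (Matrix.of fun x y : Fin m → Fin d => ∏ ℓ, ρ (x ℓ) (y ℓ)) = genOp (fun _ => ρ) := rfl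

lemma siteOp_eq_genOp (Q : Matrix (Fin d) (Fin d) ℂ) (ℓ : Fin m) :
    siteOp Q m ℓ = genOp (fun k => if k = ℓ then Q else 1) := by
  ext x y
  simp only [siteOp, genOp, Matrix.of_apply]
  rw [← Finset.mul_prod_erase Finset.univ _ (Finset.mem_univ ℓ)]
  rw [if_pos rfl, mul_comm]
  congr 1
  refine Finset.prod_congr rfl fun k hk => ?_
  rw [if_neg (Finset.mem_erase.mp hk).1, Matrix.one_apply]

end GenOp

section PermMat
variable {I : Type*} [Fintype I] [DecidableEq I]

noncomputable def permMat (e : Equiv.Perm I) : Matrix I I ℂ :=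
  Matrix.of fun x y => if y = e x then 1 else 0

lemma permMat_mem_unitary (e : Equiv.Perm I) :
    permMat e ∈ Matrix.unitaryGroup I ℂ := by
  rw [Matrix.mem_unitaryGroup_iff, Matrix.star_eq_conjTranspose]
  ext x y
  simp only [permMat, Matrix.mul_apply, Matrix.of_apply, Matrix.conjTranspose_apply]
  simp [Matrix.one_apply, apply_ite (star : ℂ → ℂ), Finset.sum_ite_eq',
    EmbeddingLike.apply_eq_iff_eq, eq_comm (a := x) (b := y)]

lemma permMat_conj_diagonal (e : Equiv.Perm I) (v : I → ℂ) :
    permMat e * diagonal v * (permMat e)ᴴ = diagonal (fun x => v (e x)) := by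
  ext x y
  simp only [permMat, Matrix.mul_apply, Matrix.of_apply, Matrix.conjTranspose_apply]
  simp only [Finset.sum_ite_eq', Finset.mem_univ, if_pos, apply_ite (star : ℂ → ℂ),
    star_one, star_zero, mul_ite, mul_one, mul_zero]
  simp only [ite_mul, zero_mul, one_mul, Finset.sum_ite_eq', Finset.mem_univ, if_pos]
  by_cases h : x = y
  · subst h; simp [diagonal_apply_eq]
  · rw [diagonal_apply_ne _ (fun hc => h (e.injective hc)), diagonal_apply_ne _ h]
end PermMat

section Sums
variable {d m : ℕ}

lemma sum_prod_fn (F : Fin m → Fin d → ℝ) :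
    ∑ x : Fin m → Fin d, ∏ k, F k (x k) = ∏ k, ∑ i, F k i :=
  (Fintype.prod_sum F).symm

lemma sum_sum_prod_fn (F : Fin m → Fin d → Fin d → ℝ) :
    ∑ x : Fin m → Fin d, ∑ y : Fin m → Fin d, ∏ k, F k (x k) (y k)
      = ∏ k, ∑ i, ∑ j, F k i j := by
  rw [← sum_prod_fn (fun k i => ∑ j, F k i j)]
  refine Finset.sum_congr rfl fun x _ => ?_
  rw [← sum_prod_fn (fun k j => F k (x k) j)]

end Sums
section Conj
variable {d m : ℕ}

lemma diagonal_sum_fn {I : Type*} [Fintype I] [DecidableEq I] {J : Type*} (s : Finset J)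
    (v : J → I → ℂ) :
    (∑ j ∈ s, diagonal (v j)) = diagonal (fun x => ∑ j ∈ s, v j x) := by
  ext x y
  by_cases h : x = y
  · subst h; simp [Matrix.sum_apply, diagonal_apply_eq]
  · simp [Matrix.sum_apply, diagonal_apply_ne _ h]

lemma genOp_const_conj_decomp (A : Matrix (Fin d) (Fin d) ℂ) (v : Fin d → ℂ) :
    genOp (fun _ : Fin m => A * diagonal v * Aᴴ)
      = genOp (fun _ : Fin m => A) * diagonal (fun x : Fin m → Fin d => ∏ k, v (x k))
        * (genOp (fun _ : Fin m => A))ᴴ := by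
  rw [genOp_conjTranspose, ← genOp_diagonal (fun _ => v), genOp_mul, genOp_mul]

lemma diagonal_site (ℓ : Fin m) (v : Fin d → ℂ) :
    diagonal (fun x : Fin m → Fin d => v (x ℓ))
      = genOp (fun k : Fin m => if k = ℓ then diagonal v else 1) := by
  have h1 : (fun k : Fin m => if k = ℓ then diagonal v else (1 : Matrix (Fin d) (Fin d) ℂ))
      = fun k => diagonal (fun i => if k = ℓ then v i else 1) := by
    funext k
    by_cases hk : k = ℓ <;> simp [hk, Matrix.diagonal_one]
  rw [h1, genOp_diagonal]
  congr 1
  funext x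
  simp

lemma siteSum_decomp (A : Matrix (Fin d) (Fin d) ℂ) (hA : A ∈ Matrix.unitaryGroup (Fin d) ℂ)
    (v : Fin d → ℂ) :
    (∑ ℓ : Fin m, siteOp (A * diagonal v * Aᴴ) m ℓ)
      = genOp (fun _ : Fin m => A) * diagonal (fun x : Fin m → Fin d => ∑ ℓ, v (x ℓ))
        * (genOp (fun _ : Fin m => A))ᴴ := by
  have hAA : A * Aᴴ = 1 := by
    rw [← Matrix.star_eq_conjTranspose]; exact Matrix.mem_unitaryGroup_iff.mp hA
  have hsite : ∀ ℓ : Fin m, siteOp (A * diagonal v * Aᴴ) m ℓ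
      = genOp (fun _ : Fin m => A) * diagonal (fun x : Fin m → Fin d => v (x ℓ))
        * (genOp (fun _ : Fin m => A))ᴴ := by
    intro ℓ
    rw [siteOp_eq_genOp, diagonal_site, genOp_conjTranspose, genOp_mul, genOp_mul]
    have : (fun k : Fin m => if k = ℓ then A * diagonal v * Aᴴ else 1)
        = (fun k : Fin m => A * (if k = ℓ then diagonal v else 1) * Aᴴ) := by
      funext k
      by_cases hk : k = ℓ
      · simp [hk]
      · simp [hk, hAA]
    rw [this]
  simp_rw [hsite]
  rw [← Finset.sum_mul, ← Finset.mul_sum, diagonal_sum_fn]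

end Conj
section Trace
variable {d m : ℕ}

lemma trace_diag_K_diag {I : Type*} [Fintype I] [DecidableEq I]
    (q E : I → ℂ) (K : Matrix I I ℂ) :
    Matrix.trace (diagonal q * K * diagonal E * Kᴴ)
      = ∑ x, ∑ y, q x * E y * (K x y * star (K x y)) := by
  simp only [Matrix.trace, Matrix.diag_apply, Matrix.mul_apply, Matrix.conjTranspose_apply,
    Matrix.diagonal_apply, ite_mul, mul_ite, zero_mul, mul_zero, Finset.sum_ite_eq,
    Finset.sum_ite_eq', Finset.mem_univ, if_true]
  refine Finset.sum_congr rfl fun x _ => Finset.sum_congr rfl fun y _ => by ring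

lemma value_trace_eq (V1 V2 : Matrix (Fin d) (Fin d) ℂ)
    (h1 : V1 ∈ Matrix.unitaryGroup (Fin d) ℂ) (h2 : V2 ∈ Matrix.unitaryGroup (Fin d) ℂ)
    (p w : Fin d → ℝ) (e : Equiv.Perm (Fin m → Fin d)) :
    Matrix.trace
      ((genOp (fun _ : Fin m => V2) * permMat e * (genOp (fun _ : Fin m => V1))ᴴ)
        * genOp (fun _ : Fin m => V1 * diagonal (fun i => (p i : ℂ)) * V1ᴴ)
        * (genOp (fun _ : Fin m => V2) * permMat e * (genOp (fun _ : Fin m => V1))ᴴ)ᴴ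
        * ∑ ℓ : Fin m, siteOp (V2 * diagonal (fun i => (w i : ℂ)) * V2ᴴ) m ℓ)
    = ((∑ x : Fin m → Fin d, (∏ k, p (e x k)) * (∑ ℓ, w (x ℓ)) : ℝ) : ℂ) := by
  have hG1 : genOp (fun _ : Fin m => V1) ∈ Matrix.unitaryGroup (Fin m → Fin d) ℂ :=
    genOp_const_mem_unitary h1
  have hG2 : genOp (fun _ : Fin m => V2) ∈ Matrix.unitaryGroup (Fin m → Fin d) ℂ :=
    genOp_const_mem_unitary h2
  set G1 := genOp (fun _ : Fin m => V1) with hG1def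
  set G2 := genOp (fun _ : Fin m => V2) with hG2def
  have hc1 : ∀ Z : Matrix (Fin m → Fin d) (Fin m → Fin d) ℂ, G1ᴴ * (G1 * Z) = Z := by
    intro Z
    rw [← mul_assoc, ← Matrix.star_eq_conjTranspose, Matrix.mem_unitaryGroup_iff'.mp hG1,
      one_mul]
  have hc2 : ∀ Z : Matrix (Fin m → Fin d) (Fin m → Fin d) ℂ, G2ᴴ * (G2 * Z) = Z := by
    intro Z
    rw [← mul_assoc, ← Matrix.star_eq_conjTranspose, Matrix.mem_unitaryGroup_iff'.mp hG2,
      one_mul]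
  have hG2' : G2ᴴ * G2 = 1 := by
    rw [← Matrix.star_eq_conjTranspose]; exact Matrix.mem_unitaryGroup_iff'.mp hG2
  rw [genOp_const_conj_decomp, siteSum_decomp V2 h2]
  rw [Matrix.conjTranspose_mul, Matrix.conjTranspose_mul, Matrix.conjTranspose_conjTranspose]
  simp only [← hG1def, ← hG2def]
  simp only [mul_assoc, hc1, hc2]
  rw [Matrix.trace_mul_comm]
  simp only [mul_assoc, hG2', mul_one]
  simp only [← mul_assoc]
  rw [permMat_conj_diagonal, Matrix.diagonal_mul_diagonal, Matrix.trace_diagonal]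
  rw [Complex.ofReal_sum]
  refine Finset.sum_congr rfl fun x _ => ?_
  rw [Complex.ofReal_mul, Complex.ofReal_prod, Complex.ofReal_sum]

lemma baseline_trace_eq (V1 V2 : Matrix (Fin d) (Fin d) ℂ)
    (h1 : V1 ∈ Matrix.unitaryGroup (Fin d) ℂ) (h2 : V2 ∈ Matrix.unitaryGroup (Fin d) ℂ)
    (p w : Fin d → ℝ) :
    Matrix.trace
      (genOp (fun _ : Fin m => V1 * diagonal (fun i => (p i : ℂ)) * V1ᴴ)
        * ∑ ℓ : Fin m, siteOp (V2 * diagonal (fun i => (w i : ℂ)) * V2ᴴ) m ℓ)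
    = ((∑ x : Fin m → Fin d, ∑ y : Fin m → Fin d,
        (∏ k, p (x k)) * (∑ ℓ, w (y ℓ)) * ∏ k, Complex.normSq ((V1ᴴ * V2) (x k) (y k)) : ℝ) : ℂ) := by
  set G1 := genOp (fun _ : Fin m => V1) with hG1def
  set G2 := genOp (fun _ : Fin m => V2) with hG2def
  rw [genOp_const_conj_decomp, siteSum_decomp V2 h2]
  simp only [← hG1def, ← hG2def]
  set Dq := diagonal (fun x : Fin m → Fin d => ∏ k, ((p (x k) : ℝ) : ℂ)) with hDq
  set DE := diagonal (fun x : Fin m → Fin d => ∑ ℓ, ((w (x ℓ) : ℝ) : ℂ)) with hDE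
  have key := trace_diag_K_diag (fun x : Fin m → Fin d => ∏ k, ((p (x k) : ℝ) : ℂ))
    (fun x : Fin m → Fin d => ∑ ℓ, ((w (x ℓ) : ℝ) : ℂ)) (G1ᴴ * G2)
  rw [Matrix.conjTranspose_mul, Matrix.conjTranspose_conjTranspose] at key
  rw [show G1 * Dq * G1ᴴ * (G2 * DE * G2ᴴ) = G1 * (Dq * (G1ᴴ * (G2 * (DE * G2ᴴ)))) from by
    simp only [mul_assoc]]
  rw [Matrix.trace_mul_comm]
  rw [show Dq * (G1ᴴ * (G2 * (DE * G2ᴴ))) * G1 = diagonal (fun x : Fin m → Fin d => ∏ k, ((p (x k) : ℝ) : ℂ)) * (G1ᴴ * G2) * DE * (G2ᴴ * G1) from by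
    rw [hDq]; simp only [mul_assoc]]
  rw [key]
  have hK : G1ᴴ * G2 = genOp (fun _ : Fin m => V1ᴴ * V2) := by
    rw [hG1def, hG2def, genOp_conjTranspose, genOp_mul]
  rw [Complex.ofReal_sum]
  refine Finset.sum_congr rfl fun x _ => ?_
  rw [Complex.ofReal_sum]
  refine Finset.sum_congr rfl fun y _ => ?_
  rw [hK]
  have hKxy : genOp (fun _ : Fin m => V1ᴴ * V2) x y = ∏ k, (V1ᴴ * V2) (x k) (y k) := rfl
  rw [hKxy]
  rw [Complex.star_def, Complex.mul_conj]
  rw [show Complex.normSq (∏ k, (V1ᴴ * V2) (x k) (y k))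
      = ∏ k, Complex.normSq ((V1ᴴ * V2) (x k) (y k)) from map_prod Complex.normSq _ _]
  push_cast
  ring

end Trace
section RealLemmas

lemma rat_between {a b : ℝ} (ha : 0 ≤ a) (h : a < b) :
    ∃ s r : ℕ, 0 < s ∧ a * s < r ∧ (r : ℝ) < b * s := by
  obtain ⟨q, hq1, hq2⟩ := exists_rat_btwn h
  have hq0 : 0 ≤ (q : ℝ) := le_of_lt (lt_of_le_of_lt ha hq1)
  have hq0' : 0 ≤ q := by exact_mod_cast hq0
  have hden : (0 : ℝ) < (q.den : ℝ) := by exact_mod_cast q.den_pos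
  have hnum : ((q.num.toNat : ℕ) : ℝ) = (q.num : ℝ) := by
    exact_mod_cast congrArg (Int.cast : ℤ → ℝ) (Int.toNat_of_nonneg (Rat.num_nonneg.mpr hq0'))
  have hcast : (q : ℝ) = (q.num : ℝ) / (q.den : ℝ) := by rw [Rat.cast_def]
  have hnd : (q.num : ℝ) = (q : ℝ) * q.den := by rw [hcast]; field_simp
  refine ⟨q.den, q.num.toNat, q.den_pos, ?_, ?_⟩
  · rw [hnum, hnd]; nlinarith
  · rw [hnum, hnd]; nlinarith

lemma squeeze_lemma (D G α lam : ℝ) (hD : 0 < D) (hα : 0 ≤ α) (hG : G ≤ 0)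
    (F1 : ∀ s r : ℕ, (s : ℝ) * α < r * D → (r : ℝ) * G ≤ s * lam)
    (F2 : ∀ s r : ℕ, (s : ℝ) * D < r * α → (r : ℝ) * lam ≤ s * G)
    (F3 : ∀ s r : ℕ, (0 : ℝ) < r * D → (r : ℝ) * G ≤ -((s : ℝ) * lam)) :
    lam * D = G * α := by
  rcases eq_or_lt_of_le hα with hα0 | hα0
  · -- α = 0 : show lam = 0
    have h1 : 0 ≤ lam := by
      by_contra hneg
      push_neg at hneg
      obtain ⟨s, hs⟩ := exists_nat_gt (G / lam)
      have h2 : (s : ℝ) * lam < G := by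
        have := (div_lt_iff_of_neg hneg).mp hs
        linarith
      have := F1 s 1 (by rw [← hα0]; push_cast; simpa using hD)
      push_cast at this
      linarith
    have h2 : lam ≤ 0 := by
      by_contra hpos
      push_neg at hpos
      obtain ⟨s, hs⟩ := exists_nat_gt (-G / lam)
      have h3 : -G < (s : ℝ) * lam := by
        have := (div_lt_iff₀ hpos).mp hs
        linarith
      have := F3 s 1 (by push_cast; simpa using hD)
      push_cast at this
      linarith
    have : lam = 0 := le_antisymm h2 h1
    rw [this, ← hα0]; ring
  · -- α > 0
    have hle : lam * D ≤ G * α := by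
      by_contra hlt
      push_neg at hlt
      rcases eq_or_lt_of_le hG with hG0 | hG0
      · -- G = 0
        have hlam : 0 < lam := by nlinarith
        have := F2 0 1 (by push_cast; simpa using hα0)
        push_cast at this
        linarith
      · -- G < 0
        have hG0' : 0 < -G := neg_pos.mpr hG0
        have hd1 : lam / G < α / D := by
          rw [show lam / G = -lam / -G from (neg_div_neg_eq _ _).symm,
            div_lt_div_iff₀ hG0' hD]
          nlinarith
        have hab : max (lam / G) 0 < α / D := by
          rw [max_lt_iff]
          exact ⟨hd1, by positivity⟩
        obtain ⟨s0, r0, hs0, h1, h2⟩ := rat_between (le_max_right _ _) hab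
        have hs0R : (0 : ℝ) < (s0 : ℝ) := by exact_mod_cast hs0
        have hcond : (r0 : ℝ) * D < s0 * α := by
          have h2' : (r0 : ℝ) < α / D * s0 := h2
          have e2 : α / D * s0 * D = α * s0 := by field_simp
          nlinarith
        have hF2 := F2 r0 s0 hcond
        have h3 : lam / G * s0 < r0 := by
          have := mul_le_mul_of_nonneg_right (le_max_left (lam/G) (0:ℝ)) (le_of_lt hs0R)
          linarith
        have h5 := mul_lt_mul_of_neg_right h3 hG0
        have e1s : lam / G * (s0 : ℝ) * G = lam * s0 := by rw [mul_right_comm, div_mul_cancel₀ lam (ne_of_lt hG0)]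
        rw [e1s] at h5
        linarith
    have hge : G * α ≤ lam * D := by
      by_contra hlt
      push_neg at hlt
      rcases eq_or_lt_of_le hG with hG0 | hG0
      · -- G = 0
        have hlam : lam < 0 := by nlinarith
        obtain ⟨r, hr⟩ := exists_nat_gt (α / D)
        have hrD : α < (r : ℝ) * D := by
          rw [div_lt_iff₀ hD] at hr
          linarith
        have := F1 1 r (by push_cast; linarith)
        rw [hG0] at this
        push_cast at this
        simp at this
        linarith
      · -- G < 0
        have hG0' : 0 < -G := neg_pos.mpr hG0
        have hab : α / D < lam / G := by
          rw [show lam / G = -lam / -G from (neg_div_neg_eq _ _).symm,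
            div_lt_div_iff₀ hD hG0']
          nlinarith
        obtain ⟨s0, r0, hs0, h1, h2⟩ := rat_between (by positivity : (0:ℝ) ≤ α / D) hab
        have hs0R : (0 : ℝ) < (s0 : ℝ) := by exact_mod_cast hs0
        have hcond : (s0 : ℝ) * α < r0 * D := by
          have e2 : α / D * s0 * D = α * s0 := by field_simp
          nlinarith
        have hF1 := F1 s0 r0 hcond
        have h5 := mul_lt_mul_of_neg_right h2 hG0
        have e1s : lam / G * (s0 : ℝ) * G = lam * s0 := by rw [mul_right_comm, div_mul_cancel₀ lam (ne_of_lt hG0)]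
        rw [e1s] at h5
        linarith
    linarith

end RealLemmas
section Gibbs

lemma gibbs_of_passive {d : ℕ} (hd : 0 < d) (r w : Fin d → ℝ)
    (hr : ∀ j, 0 < r j) (hw : ∃ j k, w j ≠ w k)
    (hP : ∀ (m : ℕ) (x y : Fin m → Fin d),
      (∑ ℓ, w (x ℓ)) < (∑ ℓ, w (y ℓ)) → (∏ ℓ, r (y ℓ)) ≤ ∏ ℓ, r (x ℓ)) :
    ∃ β c : ℝ, 0 ≤ β ∧ 0 < c ∧ ∀ j, r j = c * Real.exp (-β * w j) := by
  classical
  set L : Fin d → ℝ := fun i => Real.log (r i) with hL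
  have key : ∀ (s t : ℕ) (j k j' k' : Fin d),
      (s : ℝ) * (w k - w j) < t * (w k' - w j') →
      (s : ℝ) * L j + t * L k' ≤ s * L k + t * L j' := by
    intro s t j k j' k' hcond
    have hsum : ∀ a b : Fin d, (∑ ℓ : Fin (s+t), w ((Fin.append (fun _ : Fin s => a) (fun _ : Fin t => b)) ℓ))
        = s * w a + t * w b := by
      intro a b
      rw [Fin.sum_univ_add]
      simp [Fin.append_left, Fin.append_right, mul_comm]
    have hprod : ∀ a b : Fin d, (∏ ℓ : Fin (s+t), r ((Fin.append (fun _ : Fin s => a) (fun _ : Fin t => b)) ℓ))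
        = r a ^ s * r b ^ t := by
      intro a b
      rw [Fin.prod_univ_add]
      simp [Fin.append_left, Fin.append_right]
    have hPst := hP (s + t) (Fin.append (fun _ : Fin s => k) (fun _ : Fin t => j'))
      (Fin.append (fun _ : Fin s => j) (fun _ : Fin t => k'))
      (by rw [hsum, hsum]; linarith)
    rw [hprod, hprod] at hPst
    have hlog := Real.log_le_log (mul_pos (pow_pos (hr _) _) (pow_pos (hr _) _)) hPst
    rw [Real.log_mul (pow_pos (hr _) _).ne' (pow_pos (hr _) _).ne',
      Real.log_mul (pow_pos (hr _) _).ne' (pow_pos (hr _) _).ne',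
      Real.log_pow, Real.log_pow, Real.log_pow, Real.log_pow] at hlog
    simpa [hL] using hlog
  have hne : (Finset.univ : Finset (Fin d)).Nonempty := ⟨⟨0, hd⟩, Finset.mem_univ _⟩
  obtain ⟨i0, -, hi0⟩ := Finset.exists_min_image Finset.univ w hne
  obtain ⟨i1, -, hi1⟩ := Finset.exists_max_image Finset.univ w hne
  have hi0' : ∀ j, w i0 ≤ w j := fun j => hi0 j (Finset.mem_univ j)
  have hi1' : ∀ j, w j ≤ w i1 := fun j => hi1 j (Finset.mem_univ j)
  set D : ℝ := w i1 - w i0 with hD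
  have hDpos : 0 < D := by
    obtain ⟨j, k, hjk⟩ := hw
    rw [hD]
    rcases lt_trichotomy (w j) (w k) with h | h | h
    · linarith [hi0' j, hi1' k]
    · exact absurd h hjk
    · linarith [hi0' k, hi1' j]
  have hDne : D ≠ 0 := ne_of_gt hDpos
  set G : ℝ := L i1 - L i0 with hG
  have hGle : G ≤ 0 := by
    have := key 0 1 i0 i0 i0 i1 (by push_cast; simpa [hD] using hDpos)
    push_cast at this
    rw [hG]; linarith
  have hβ : 0 ≤ -G / D := div_nonneg (by linarith) (le_of_lt hDpos)
  refine ⟨-G / D, r i0 * Real.exp ((-G / D) * w i0), hβ, mul_pos (hr i0) (Real.exp_pos _), fun j => ?_⟩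
  have hα : 0 ≤ w j - w i0 := by linarith [hi0' j]
  have F1 : ∀ s t : ℕ, (s : ℝ) * (w j - w i0) < t * D → (t : ℝ) * G ≤ s * (L j - L i0) := by
    intro s t hc
    have := key s t i0 j i0 i1 (by rw [hD] at hc; exact hc)
    rw [hG]; linarith
  have F2 : ∀ s t : ℕ, (s : ℝ) * D < t * (w j - w i0) → (t : ℝ) * (L j - L i0) ≤ s * G := by
    intro s t hc
    have := key s t i0 i1 i0 j (by rw [hD] at hc; exact hc)
    rw [hG]; linarith
  have F3 : ∀ s t : ℕ, (0 : ℝ) < t * D → (t : ℝ) * G ≤ -((s : ℝ) * (L j - L i0)) := by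
    intro s t hc
    have hcond : (s : ℝ) * (w i0 - w j) < t * (w i1 - w i0) := by
      have h1 : (s : ℝ) * (w i0 - w j) ≤ 0 :=
        mul_nonpos_of_nonneg_of_nonpos (Nat.cast_nonneg s) (by linarith)
      rw [hD] at hc; linarith
    have := key s t j i0 i0 i1 hcond
    rw [hG]; linarith
  have hsq := squeeze_lemma D G (w j - w i0) (L j - L i0) hDpos hα hGle F1 F2 F3
  have hrj : r j = Real.exp (L j) := (Real.exp_log (hr j)).symm
  have hri0 : r i0 = Real.exp (L i0) := (Real.exp_log (hr i0)).symm
  rw [hrj, hri0, ← Real.exp_add, ← Real.exp_add]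
  congr 1
  have expand : L i0 + -G / D * w i0 + -(-G / D) * w j = L i0 + G * (w j - w i0) / D := by
    ring
  rw [expand]
  have hfrac : G * (w j - w i0) / D = L j - L i0 := by
    rw [div_eq_iff hDne]; linarith [hsq]
  rw [hfrac]; ring

end Gibbs
section MoreSums
variable {d m : ℕ}

lemma sum_qE (r w : Fin d → ℝ) (hr1 : ∑ j, r j = 1) :
    ∑ x : Fin m → Fin d, (∏ k, r (x k)) * (∑ ℓ, w (x ℓ))
      = m * ∑ j, r j * w j := by
  have perℓ : ∀ ℓ : Fin m, (∑ x : Fin m → Fin d, (∏ k, r (x k)) * w (x ℓ))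
      = ∑ j, r j * w j := by
    intro ℓ
    have h1 : ∀ x : Fin m → Fin d, (∏ k, r (x k)) * w (x ℓ)
        = ∏ k, (r (x k) * if k = ℓ then w (x k) else 1) := by
      intro x
      rw [Finset.prod_mul_distrib]
      congr 1
      simp
    simp_rw [h1]
    rw [sum_prod_fn (fun k i => r i * if k = ℓ then w i else 1)]
    have h2 : ∀ k : Fin m, (∑ i, r i * if k = ℓ then w i else 1)
        = if k = ℓ then ∑ j, r j * w j else 1 := by
      intro k
      split <;> simp [hr1]
    simp_rw [h2]
    simp
  calc ∑ x : Fin m → Fin d, (∏ k, r (x k)) * (∑ ℓ, w (x ℓ))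
      = ∑ x : Fin m → Fin d, ∑ ℓ, (∏ k, r (x k)) * w (x ℓ) := by
        simp_rw [Finset.mul_sum]
    _ = ∑ ℓ : Fin m, ∑ x : Fin m → Fin d, (∏ k, r (x k)) * w (x ℓ) := Finset.sum_comm
    _ = ∑ ℓ : Fin m, ∑ j, r j * w j := by simp_rw [perℓ]
    _ = m * ∑ j, r j * w j := by
        rw [Finset.sum_const, Finset.card_univ, Fintype.card_fin, nsmul_eq_mul]

lemma sum_qEB (p w : Fin d → ℝ) (B : Fin d → Fin d → ℝ)
    (hp1 : ∑ i, p i = 1) (hB : ∀ i, ∑ j, B i j = 1) :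
    ∑ x : Fin m → Fin d, ∑ y : Fin m → Fin d,
        (∏ k, p (x k)) * (∑ ℓ, w (y ℓ)) * ∏ k, B (x k) (y k)
      = m * ∑ i, ∑ j, p i * w j * B i j := by
  have perℓ : ∀ ℓ : Fin m,
      (∑ x : Fin m → Fin d, ∑ y : Fin m → Fin d,
        (∏ k, p (x k)) * w (y ℓ) * ∏ k, B (x k) (y k))
      = ∑ i, ∑ j, p i * w j * B i j := by
    intro ℓ
    have h1 : ∀ x y : Fin m → Fin d, (∏ k, p (x k)) * w (y ℓ) * ∏ k, B (x k) (y k)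
        = ∏ k, (p (x k) * B (x k) (y k) * if k = ℓ then w (y k) else 1) := by
      intro x y
      rw [Finset.prod_mul_distrib, Finset.prod_mul_distrib]
      have : (∏ k, if k = ℓ then w (y k) else 1) = w (y ℓ) := by simp
      rw [this]
      ring
    simp_rw [h1]
    rw [sum_sum_prod_fn (fun k i j => p i * B i j * if k = ℓ then w j else 1)]
    have h2 : ∀ k : Fin m, (∑ i, ∑ j, p i * B i j * if k = ℓ then w j else 1)
        = if k = ℓ then ∑ i, ∑ j, p i * w j * B i j else 1 := by
      intro k
      split
      · refine Finset.sum_congr rfl fun i _ => Finset.sum_congr rfl fun j _ => by ring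
      · calc (∑ i, ∑ j, p i * B i j * 1) = ∑ i, p i * ∑ j, B i j := by
              refine Finset.sum_congr rfl fun i _ => ?_
              rw [Finset.mul_sum]
              exact Finset.sum_congr rfl fun j _ => by ring
          _ = 1 := by simp_rw [hB]; simpa using hp1
    simp_rw [h2]
    simp
  calc ∑ x : Fin m → Fin d, ∑ y : Fin m → Fin d,
        (∏ k, p (x k)) * (∑ ℓ, w (y ℓ)) * ∏ k, B (x k) (y k)
      = ∑ x : Fin m → Fin d, ∑ y : Fin m → Fin d, ∑ ℓ,
          (∏ k, p (x k)) * w (y ℓ) * ∏ k, B (x k) (y k) := by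
        refine Finset.sum_congr rfl fun x _ => Finset.sum_congr rfl fun y _ => ?_
        rw [Finset.mul_sum, Finset.sum_mul]
    _ = ∑ x : Fin m → Fin d, ∑ ℓ : Fin m, ∑ y : Fin m → Fin d,
          (∏ k, p (x k)) * w (y ℓ) * ∏ k, B (x k) (y k) :=
        Finset.sum_congr rfl fun x _ => Finset.sum_comm
    _ = ∑ ℓ : Fin m, ∑ x : Fin m → Fin d, ∑ y : Fin m → Fin d,
          (∏ k, p (x k)) * w (y ℓ) * ∏ k, B (x k) (y k) := Finset.sum_comm
    _ = ∑ ℓ : Fin m, ∑ i, ∑ j, p i * w j * B i j := by simp_rw [perℓ]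
    _ = m * ∑ i, ∑ j, p i * w j * B i j := by
        rw [Finset.sum_const, Finset.card_univ, Fintype.card_fin, nsmul_eq_mul]

lemma swap_reindex {I : Type*} [Fintype I] [DecidableEq I] (R E : I → ℝ) (a b : I) :
    ∑ x, R (Equiv.swap a b x) * E x = ∑ x, R x * E (Equiv.swap a b x) := by
  refine Fintype.sum_equiv (Equiv.swap a b) _ _ fun x => ?_
  rw [Equiv.swap_apply_self]

lemma swap_sum_decomp {I : Type*} [Fintype I] [DecidableEq I] (R E : I → ℝ) (a b : I)
    (hab : a ≠ b) :
    ∑ x, R x * E (Equiv.swap a b x)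
      = (∑ x, R x * E x) + (R a - R b) * (E b - E a) := by
  have hzero : ∀ x ∈ Finset.univ, x ∉ ({a, b} : Finset I) →
      R x * E (Equiv.swap a b x) - R x * E x = 0 := by
    intro x _ hx
    simp only [Finset.mem_insert, Finset.mem_singleton, not_or] at hx
    rw [Equiv.swap_apply_of_ne_of_ne hx.1 hx.2]
    ring
  have hdiff : ∑ x, (R x * E (Equiv.swap a b x) - R x * E x)
      = (R a - R b) * (E b - E a) := by
    rw [← Finset.sum_subset (Finset.subset_univ ({a, b} : Finset I)) hzero]
    rw [Finset.sum_pair hab]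
    rw [Equiv.swap_apply_left, Equiv.swap_apply_right]
    ring
  have := Finset.sum_sub_distrib (s := (Finset.univ : Finset I))
    (f := fun x => R x * E (Equiv.swap a b x)) (g := fun x => R x * E x)
  rw [this] at hdiff
  linarith

lemma birkhoff_bound (p w : Fin d → ℝ) (B : Matrix (Fin d) (Fin d) ℝ)
    (hB : B ∈ doublyStochastic ℝ (Fin d)) (M : ℝ)
    (hM : ∀ σ : Equiv.Perm (Fin d), M ≤ ∑ i, p i * w (σ i)) :
    M ≤ ∑ i, ∑ j, p i * w j * B i j := by
  obtain ⟨wt, h0, h1, h2⟩ := exists_eq_sum_perm_of_mem_doublyStochastic hB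
  have hBij : ∀ i j, B i j = ∑ σ : Equiv.Perm (Fin d), wt σ * σ.permMatrix ℝ i j := by
    intro i j
    rw [← h2]
    simp [Matrix.sum_apply]
  have hperm : ∀ (σ : Equiv.Perm (Fin d)) i, (∑ j, p i * w j * σ.permMatrix ℝ i j)
      = p i * w (σ i) := by
    intro σ i
    simp [Equiv.Perm.permMatrix, PEquiv.toMatrix_apply, Equiv.toPEquiv_apply,
      Option.mem_def, mul_ite, Finset.sum_ite_eq']
  calc M = M * ∑ σ : Equiv.Perm (Fin d), wt σ := by rw [h1, mul_one]
    _ = ∑ σ : Equiv.Perm (Fin d), wt σ * M := by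
        rw [Finset.mul_sum]; exact Finset.sum_congr rfl fun σ _ => by ring
    _ ≤ ∑ σ : Equiv.Perm (Fin d), wt σ * ∑ i, p i * w (σ i) := by
        refine Finset.sum_le_sum fun σ _ => ?_
        exact mul_le_mul_of_nonneg_left (hM σ) (h0 σ)
    _ = ∑ i, ∑ j, p i * w j * B i j := by
        simp_rw [hBij]
        have h3 : ∀ i j, p i * w j * (∑ σ : Equiv.Perm (Fin d), wt σ * σ.permMatrix ℝ i j)
            = ∑ σ : Equiv.Perm (Fin d), wt σ * (p i * w j * σ.permMatrix ℝ i j) := by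
          intro i j
          rw [Finset.mul_sum]
          exact Finset.sum_congr rfl fun σ _ => by ring
        simp_rw [h3]
        refine Eq.symm ?_
        calc ∑ i, ∑ j, ∑ σ : Equiv.Perm (Fin d), wt σ * (p i * w j * σ.permMatrix ℝ i j)
            = ∑ i, ∑ σ : Equiv.Perm (Fin d), ∑ j, wt σ * (p i * w j * σ.permMatrix ℝ i j) :=
              Finset.sum_congr rfl fun i _ => Finset.sum_comm
          _ = ∑ σ : Equiv.Perm (Fin d), ∑ i, ∑ j, wt σ * (p i * w j * σ.permMatrix ℝ i j) :=
              Finset.sum_comm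
          _ = ∑ σ : Equiv.Perm (Fin d), wt σ * ∑ i, p i * w (σ i) := by
              refine Finset.sum_congr rfl fun σ _ => ?_
              rw [Finset.mul_sum]
              refine Finset.sum_congr rfl fun i _ => ?_
              rw [← Finset.mul_sum, hperm σ i]
end MoreSums

section MatExpFacts

lemma matExp_eq_exp {n : Type*} [Fintype n] [DecidableEq n] (A : Matrix n n ℂ) :
    matExp A = NormedSpace.exp A := by
  rw [NormedSpace.exp_eq_tsum ℂ]
  rfl

lemma matExp_conj_diag {n : Type*} [Fintype n] [DecidableEq n] (V : Matrix n n ℂ)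
    (hV : V ∈ Matrix.unitaryGroup n ℂ) (v : n → ℂ) :
    matExp (V * diagonal v * Vᴴ) = V * diagonal (fun i => Complex.exp (v i)) * Vᴴ := by
  rw [matExp_eq_exp]
  have h1 : star V * V = 1 := Matrix.mem_unitaryGroup_iff'.mp hV
  have hinv : V⁻¹ = star V := Matrix.inv_eq_left_inv h1
  have hu : IsUnit V := ⟨Unitary.toUnits ⟨V, hV⟩, rfl⟩
  have hVH : Vᴴ = V⁻¹ := by rw [hinv, Matrix.star_eq_conjTranspose]
  rw [hVH, Matrix.exp_conj V _ hu, Matrix.exp_diagonal]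
  have hexp : NormedSpace.exp v = fun i => Complex.exp (v i) := by
    funext i
    rw [Pi.exp_def, Complex.exp_eq_exp_ℂ]
  rw [hexp]

lemma matExp_zero {n : Type*} [Fintype n] [DecidableEq n] :
    matExp (0 : Matrix n n ℂ) = 1 := by
  rw [matExp_eq_exp, NormedSpace.exp_zero]

end MatExpFacts

section EqualitySupport

lemma equality_support {d : ℕ} (pv rv wv av : Fin d → ℝ) (Bm : Fin d → Fin d → ℝ)
    (hpv : ∀ i, 0 < pv i) (hrv : ∀ j, 0 < rv j)
    (hB0 : ∀ i j, 0 ≤ Bm i j) (hBrow : ∀ i, ∑ j, Bm i j = 1) (hBcol : ∀ j, ∑ i, Bm i j = 1)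
    (β : ℝ) (hβ : 0 < β)
    (hrel : ∀ i j, Real.log (pv i) - Real.log (rv j) = β * (wv j - av i))
    (hTM : ∑ i, ∑ j, pv i * wv j * Bm i j = ∑ i, pv i * av i)
    (hsum : ∑ i, pv i = 1) (hsum' : ∑ j, rv j = 1) :
    ∀ i j, Bm i j ≠ 0 → pv i = rv j := by
  classical
  set t : Fin d → Fin d → ℝ :=
    fun i j => Bm i j * (pv i * (wv j - av i) - (pv i - rv j) / β) with ht
  have htnonneg : ∀ i j, 0 ≤ t i j := by
    intro i j
    refine mul_nonneg (hB0 i j) ?_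
    have hlog : Real.log (rv j / pv i) ≤ rv j / pv i - 1 :=
      Real.log_le_sub_one_of_pos (div_pos (hrv j) (hpv i))
    have hlogd : Real.log (rv j / pv i) = Real.log (rv j) - Real.log (pv i) :=
      Real.log_div (hrv j).ne' (hpv i).ne'
    have hkey : pv i - rv j ≤ pv i * (Real.log (pv i) - Real.log (rv j)) := by
      have h2 : pv i * Real.log (rv j / pv i) ≤ pv i * (rv j / pv i - 1) :=
        mul_le_mul_of_nonneg_left hlog (hpv i).le
      rw [hlogd] at h2
      have h3 : pv i * (rv j / pv i - 1) = rv j - pv i := by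
        rw [mul_comm (pv i), sub_mul, div_mul_cancel₀ _ (hpv i).ne', one_mul]
      nlinarith [h2, h3]
      
    have h4 : pv i * (wv j - av i) = pv i * (Real.log (pv i) - Real.log (rv j)) / β := by
      rw [hrel i j, mul_comm β _, mul_comm (pv i) _, mul_div_assoc,
        mul_div_cancel_right₀ _ hβ.ne', mul_comm]
    rw [h4, sub_nonneg, div_le_div_iff₀ hβ hβ]
    nlinarith [mul_le_mul_of_nonneg_right hkey hβ.le]
  have htstrict : ∀ i j, Bm i j ≠ 0 → pv i ≠ rv j → 0 < t i j := by
    intro i j hBij hne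
    have hBpos : 0 < Bm i j := lt_of_le_of_ne (hB0 i j) (Ne.symm hBij)
    refine mul_pos hBpos ?_
    have hz : rv j / pv i ≠ 1 := by
      intro hz1
      exact hne ((div_eq_one_iff_eq (hpv i).ne').mp hz1).symm
    have hlog : Real.log (rv j / pv i) < rv j / pv i - 1 :=
      Real.log_lt_sub_one_of_pos (div_pos (hrv j) (hpv i)) hz
    have hlogd : Real.log (rv j / pv i) = Real.log (rv j) - Real.log (pv i) :=
      Real.log_div (hrv j).ne' (hpv i).ne'
    have hkey : pv i - rv j < pv i * (Real.log (pv i) - Real.log (rv j)) := by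
      have h2 : pv i * Real.log (rv j / pv i) < pv i * (rv j / pv i - 1) :=
        (mul_lt_mul_iff_right₀ (hpv i)).mpr hlog
      rw [hlogd] at h2
      have h3 : pv i * (rv j / pv i - 1) = rv j - pv i := by
        rw [mul_comm (pv i), sub_mul, div_mul_cancel₀ _ (hpv i).ne', one_mul]
      nlinarith [h2, h3]
    have h4 : pv i * (wv j - av i) = pv i * (Real.log (pv i) - Real.log (rv j)) / β := by
      rw [hrel i j, mul_comm β _, mul_comm (pv i) _, mul_div_assoc,
        mul_div_cancel_right₀ _ hβ.ne', mul_comm]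
    rw [h4, sub_pos, div_lt_div_iff₀ hβ hβ]
    nlinarith [mul_lt_mul_of_pos_right hkey hβ]
  have htsum : ∑ i, ∑ j, t i j = 0 := by
    have e1 : ∀ i j, t i j = pv i * wv j * Bm i j - pv i * av i * Bm i j
        - (pv i * Bm i j - rv j * Bm i j) / β := by
      intro i j
      rw [ht]
      field_simp
    simp_rw [e1]
    rw [Finset.sum_congr rfl (fun i (_ : i ∈ Finset.univ) => Finset.sum_sub_distrib _ _),
      Finset.sum_sub_distrib]
    rw [Finset.sum_congr rfl (fun i (_ : i ∈ Finset.univ) => Finset.sum_sub_distrib (s := Finset.univ) _ _),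
      Finset.sum_sub_distrib]
    have e2 : ∑ i, ∑ j, pv i * av i * Bm i j = ∑ i, pv i * av i := by
      refine Finset.sum_congr rfl fun i _ => ?_
      rw [← Finset.mul_sum, hBrow i, mul_one]
    have e3 : ∑ i, ∑ j, pv i * Bm i j / β = 1 / β := by
      have : ∀ i, ∑ j, pv i * Bm i j / β = pv i / β := by
        intro i
        rw [← Finset.sum_div, ← Finset.mul_sum, hBrow i, mul_one]
      simp_rw [this]
      rw [← Finset.sum_div, hsum]
    have e4 : ∑ i, ∑ j, rv j * Bm i j / β = 1 / β := by
      rw [Finset.sum_comm]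
      have : ∀ j, ∑ i, rv j * Bm i j / β = rv j / β := by
        intro j
        rw [← Finset.sum_div, ← Finset.mul_sum, hBcol j, mul_one]
      simp_rw [this]
      rw [← Finset.sum_div, hsum']
    have e5 : ∑ i, ∑ j, (pv i * Bm i j - rv j * Bm i j) / β
        = ∑ i, ∑ j, (pv i * Bm i j / β - rv j * Bm i j / β) := by
      refine Finset.sum_congr rfl fun i _ => Finset.sum_congr rfl fun j _ => ?_
      rw [sub_div]
    rw [e5] at *
    rw [Finset.sum_congr rfl (fun i (_ : i ∈ Finset.univ) => Finset.sum_sub_distrib (s := Finset.univ) _ _),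
      Finset.sum_sub_distrib, e2, e3, e4, hTM]
    ring
  have hall : ∀ i j, t i j = 0 := by
    have houter : ∀ i ∈ Finset.univ, (0:ℝ) ≤ ∑ j, t i j :=
      fun i _ => Finset.sum_nonneg fun j _ => htnonneg i j
    have h1 := (Finset.sum_eq_zero_iff_of_nonneg houter).mp htsum
    intro i j
    have h2 := h1 i (Finset.mem_univ i)
    have h3 := (Finset.sum_eq_zero_iff_of_nonneg (fun j _ => htnonneg i j)).mp h2
    exact h3 j (Finset.mem_univ j)
  intro i j hBij
  by_contra hne
  exact (htstrict i j hBij hne).ne' (hall i j)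

end EqualitySupport
set_option maxHeartbeats 2000000 in
/-- From sufficiently many copies of any full-rank state that
is not a thermal state of the payoff observable `W` (for any `β ≥ 0`), a
nonzero amount of chemical work can be extracted by some unitary. -/
theorem work_extractable_of_not_NATS
    {d : ℕ} (W : Matrix (Fin d) (Fin d) ℂ) (hW : W.IsHermitian)
    (hWscalar : ¬ ∃ r : ℝ, W = (r : ℂ) • 1)
    (ρ : Matrix (Fin d) (Fin d) ℂ) (hρ : ρ.PosDef) (hρ1 : ρ.trace = 1)
    (hρne : ∀ β : ℝ, 0 ≤ β →
      ρ ≠ (Matrix.trace (matExp (-(β : ℂ) • W)))⁻¹ • matExp (-(β : ℂ) • W)) :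
    ∃ m : ℕ, 1 ≤ m ∧
      ∃ U : Matrix (Fin m → Fin d) (Fin m → Fin d) ℂ,
        U ∈ Matrix.unitaryGroup (Fin m → Fin d) ℂ ∧
        (Matrix.trace (U * tensorPow ρ m * Uᴴ * ∑ ℓ : Fin m, siteOp W m ℓ)).re <
          (Matrix.trace (tensorPow ρ m * ∑ ℓ : Fin m, siteOp W m ℓ)).re := by
  classical
  by_contra hcon
  push_neg at hcon
  have hd : 0 < d := by
    rcases Nat.eq_zero_or_pos d with h0 | h
    · exfalso
      have h1 : ρ.trace = 0 := by
        subst h0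
        simp [Matrix.trace]
      exact one_ne_zero (hρ1.symm.trans h1)
    · exact h
  have hρH : ρ.IsHermitian := hρ.1
  obtain ⟨Vρ, pv, hVρU, hρspec, hpv⟩ :
      ∃ (V : Matrix (Fin d) (Fin d) ℂ) (p : Fin d → ℝ),
        V ∈ Matrix.unitaryGroup (Fin d) ℂ ∧
        ρ = V * diagonal (fun i => (p i : ℂ)) * Vᴴ ∧ (∀ i, 0 < p i) := by
    refine ⟨hρH.eigenvectorUnitary, hρH.eigenvalues, hρH.eigenvectorUnitary.2, ?_,
      fun i => hρ.eigenvalues_pos i⟩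
    have h := hρH.spectral_theorem
    rw [← Matrix.star_eq_conjTranspose]
    exact h
  obtain ⟨Vw, wv, hVwU, hWspec⟩ :
      ∃ (V : Matrix (Fin d) (Fin d) ℂ) (w : Fin d → ℝ),
        V ∈ Matrix.unitaryGroup (Fin d) ℂ ∧
        W = V * diagonal (fun i => (w i : ℂ)) * Vᴴ := by
    refine ⟨hW.eigenvectorUnitary, hW.eigenvalues, hW.eigenvectorUnitary.2, ?_⟩
    have h := hW.spectral_theorem
    rw [← Matrix.star_eq_conjTranspose]
    exact h
  have hVρc : Vρᴴ * Vρ = 1 := by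
    rw [← Matrix.star_eq_conjTranspose]
    exact Matrix.mem_unitaryGroup_iff'.mp hVρU
  have hVρc' : Vρ * Vρᴴ = 1 := by
    rw [← Matrix.star_eq_conjTranspose]
    exact Matrix.mem_unitaryGroup_iff.mp hVρU
  have hVwc : Vwᴴ * Vw = 1 := by
    rw [← Matrix.star_eq_conjTranspose]
    exact Matrix.mem_unitaryGroup_iff'.mp hVwU
  have hVwc' : Vw * Vwᴴ = 1 := by
    rw [← Matrix.star_eq_conjTranspose]
    exact Matrix.mem_unitaryGroup_iff.mp hVwU
  have hpv1 : ∑ i, pv i = 1 := by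
    have h1 : ρ.trace = ∑ i, (pv i : ℂ) := by
      rw [hρspec, Matrix.trace_mul_comm, ← mul_assoc, hVρc, one_mul, Matrix.trace_diagonal]
    rw [hρ1] at h1
    have h2 : ((∑ i, pv i : ℝ) : ℂ) = 1 := by
      push_cast
      exact h1.symm
    exact_mod_cast h2
  -- the overlap matrix and its doubly stochastic square
  have hCU : Vρᴴ * Vw ∈ Matrix.unitaryGroup (Fin d) ℂ := by
    refine Submonoid.mul_mem _ ?_ hVwU
    rw [← Matrix.star_eq_conjTranspose]
    exact Unitary.star_mem hVρU
  have hBrow : ∀ i, ∑ j, Complex.normSq ((Vρᴴ * Vw) i j) = 1 := by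
    intro i
    have hCC : (Vρᴴ * Vw) * ((Vρᴴ * Vw))ᴴ = 1 := by
      have h := Matrix.mem_unitaryGroup_iff.mp hCU
      rwa [Matrix.star_eq_conjTranspose] at h
    have h1 : ∑ j, (Vρᴴ * Vw) i j * ((Vρᴴ * Vw)ᴴ) j i = 1 := by
      rw [← Matrix.mul_apply, hCC]
      simp [Matrix.one_apply]
    have h2 : ∀ j, (Vρᴴ * Vw) i j * ((Vρᴴ * Vw)ᴴ) j i
        = (Complex.normSq ((Vρᴴ * Vw) i j) : ℂ) := by
      intro j
      rw [Matrix.conjTranspose_apply, Complex.star_def, Complex.mul_conj]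
    rw [Finset.sum_congr rfl (fun j _ => h2 j)] at h1
    have h3 : ((∑ j, Complex.normSq ((Vρᴴ * Vw) i j) : ℝ) : ℂ) = 1 := by
      push_cast
      exact h1
    exact_mod_cast h3
  have hBcol : ∀ j, ∑ i, Complex.normSq ((Vρᴴ * Vw) i j) = 1 := by
    intro j
    have hCC : ((Vρᴴ * Vw))ᴴ * (Vρᴴ * Vw) = 1 := by
      have h := Matrix.mem_unitaryGroup_iff'.mp hCU
      rwa [Matrix.star_eq_conjTranspose] at h
    have h1 : ∑ i, ((Vρᴴ * Vw)ᴴ) j i * (Vρᴴ * Vw) i j = 1 := by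
      rw [← Matrix.mul_apply, hCC]
      simp [Matrix.one_apply]
    have h2 : ∀ i, ((Vρᴴ * Vw)ᴴ) j i * (Vρᴴ * Vw) i j
        = (Complex.normSq ((Vρᴴ * Vw) i j) : ℂ) := by
      intro i
      rw [Matrix.conjTranspose_apply, Complex.star_def, mul_comm, Complex.mul_conj]
    rw [Finset.sum_congr rfl (fun i _ => h2 i)] at h1
    have h3 : ((∑ i, Complex.normSq ((Vρᴴ * Vw) i j) : ℝ) : ℂ) = 1 := by
      push_cast
      exact h1
    exact_mod_cast h3
  set T : ℝ := ∑ i, ∑ j, pv i * wv j * Complex.normSq ((Vρᴴ * Vw) i j) with hTdef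
  -- consequence of the negated goal
  have hNE : ∀ (m : ℕ), 1 ≤ m → ∀ e : Equiv.Perm (Fin m → Fin d),
      (m : ℝ) * T ≤ ∑ x : Fin m → Fin d, (∏ k, pv (e x k)) * (∑ ℓ, wv (x ℓ)) := by
    intro m hm e
    have hU : genOp (fun _ : Fin m => Vw) * permMat e * (genOp fun _ : Fin m => Vρ)ᴴ
        ∈ Matrix.unitaryGroup (Fin m → Fin d) ℂ := by
      refine Submonoid.mul_mem _
        (Submonoid.mul_mem _ (genOp_const_mem_unitary hVwU) (permMat_mem_unitary e)) ?_
      rw [← Matrix.star_eq_conjTranspose]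
      exact Unitary.star_mem (genOp_const_mem_unitary hVρU)
    have hb := hcon m hm _ hU
    have e1 : tensorPow ρ m
        = genOp (fun _ : Fin m => Vρ * diagonal (fun i => (pv i : ℂ)) * Vρᴴ) :=
      congrArg (fun X : Matrix (Fin d) (Fin d) ℂ => genOp (fun _ : Fin m => X)) hρspec
    have e2 : (∑ ℓ : Fin m, siteOp W m ℓ)
        = ∑ ℓ : Fin m, siteOp (Vw * diagonal (fun i => (wv i : ℂ)) * Vwᴴ) m ℓ :=
      congrArg (fun X : Matrix (Fin d) (Fin d) ℂ => ∑ ℓ : Fin m, siteOp X m ℓ) hWspec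
    rw [e1, e2, value_trace_eq Vρ Vw hVρU hVwU pv wv e,
      baseline_trace_eq Vρ Vw hVρU hVwU pv wv, Complex.ofReal_re, Complex.ofReal_re,
      sum_qEB pv wv (fun i j => Complex.normSq ((Vρᴴ * Vw) i j)) hpv1 hBrow] at hb
    exact hb
  -- minimizing permutation
  obtain ⟨σs, -, hσsmin⟩ := Finset.exists_min_image Finset.univ
    (fun σ : Equiv.Perm (Fin d) => ∑ i, pv i * wv (σ i)) ⟨1, Finset.mem_univ 1⟩
  set M : ℝ := ∑ i, pv i * wv (σs i) with hMdef
  have hσs' : ∀ σ : Equiv.Perm (Fin d), M ≤ ∑ i, pv i * wv (σ i) :=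
    fun σ => hσsmin σ (Finset.mem_univ σ)
  -- Birkhoff/von Neumann: M ≤ T
  have hTM1 : M ≤ T := by
    have hBds : (Matrix.of fun i j => Complex.normSq ((Vρᴴ * Vw) i j))
        ∈ doublyStochastic ℝ (Fin d) := by
      rw [mem_doublyStochastic_iff_sum]
      exact ⟨fun i j => Complex.normSq_nonneg _, hBrow, hBcol⟩
    have h := birkhoff_bound pv wv _ hBds M hσs'
    simpa using h
  set rv : Fin d → ℝ := fun j => pv (σs.symm j) with hrvdef
  have hrvpos : ∀ j, 0 < rv j := fun j => hpv _
  have hrv1 : ∑ j, rv j = 1 := by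
    rw [← hpv1]
    exact Fintype.sum_equiv σs.symm _ _ fun j => rfl
  have hrvM : ∑ j, rv j * wv j = M := by
    rw [hMdef]
    refine (Fintype.sum_equiv σs (fun i => pv i * wv (σs i)) (fun j => rv j * wv j)
      fun i => ?_).symm
    rw [hrvdef]
    simp
  have hTM2 : T ≤ M := by
    have h1 := hNE 1 le_rfl (Equiv.arrowCongr (Equiv.refl (Fin 1)) σs.symm)
    have h2 : (∑ x : Fin 1 → Fin d,
        (∏ k, pv ((Equiv.arrowCongr (Equiv.refl (Fin 1)) σs.symm) x k)) * (∑ ℓ, wv (x ℓ)))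
        = ((1:ℕ) : ℝ) * ∑ j, rv j * wv j := by
      calc (∑ x : Fin 1 → Fin d,
          (∏ k, pv ((Equiv.arrowCongr (Equiv.refl (Fin 1)) σs.symm) x k)) * (∑ ℓ, wv (x ℓ)))
          = ∑ x : Fin 1 → Fin d, (∏ k, rv (x k)) * (∑ ℓ, wv (x ℓ)) := rfl
        _ = ((1:ℕ) : ℝ) * ∑ j, rv j * wv j := sum_qE rv wv hrv1
    rw [h2, hrvM] at h1
    push_cast at h1
    linarith
  have hTM : T = M := le_antisymm hTM2 hTM1
  -- passivity of all tensor powers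
  have hPassive : ∀ (m : ℕ) (x y : Fin m → Fin d),
      (∑ ℓ, wv (x ℓ)) < (∑ ℓ, wv (y ℓ)) → (∏ ℓ, rv (y ℓ)) ≤ ∏ ℓ, rv (x ℓ) := by
    intro m x y hxy
    have hm : 1 ≤ m := by
      rcases Nat.eq_zero_or_pos m with h0 | h
      · exfalso
        subst h0
        simp at hxy
      · exact h
    have hxyne : x ≠ y := by
      rintro rfl
      exact lt_irrefl _ hxy
    have h1 := hNE m hm ((Equiv.swap x y).trans
      (Equiv.arrowCongr (Equiv.refl (Fin m)) σs.symm))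
    have hval : (∑ z : Fin m → Fin d,
        (∏ k, pv (((Equiv.swap x y).trans
          (Equiv.arrowCongr (Equiv.refl (Fin m)) σs.symm)) z k)) * (∑ ℓ, wv (z ℓ)))
        = (m : ℝ) * M + ((∏ k, rv (x k)) - ∏ k, rv (y k))
            * ((∑ ℓ, wv (y ℓ)) - ∑ ℓ, wv (x ℓ)) := by
      calc (∑ z : Fin m → Fin d,
          (∏ k, pv (((Equiv.swap x y).trans
            (Equiv.arrowCongr (Equiv.refl (Fin m)) σs.symm)) z k)) * (∑ ℓ, wv (z ℓ)))
          = ∑ z : Fin m → Fin d,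
              (fun u : Fin m → Fin d => ∏ k, rv (u k)) (Equiv.swap x y z)
              * (fun u : Fin m → Fin d => ∑ ℓ, wv (u ℓ)) z := rfl
        _ = ∑ z : Fin m → Fin d,
              (fun u : Fin m → Fin d => ∏ k, rv (u k)) z
              * (fun u : Fin m → Fin d => ∑ ℓ, wv (u ℓ)) (Equiv.swap x y z) :=
            swap_reindex (fun u : Fin m → Fin d => ∏ k, rv (u k))
              (fun u : Fin m → Fin d => ∑ ℓ, wv (u ℓ)) x y
        _ = (∑ z : Fin m → Fin d,
              (fun u : Fin m → Fin d => ∏ k, rv (u k)) z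
              * (fun u : Fin m → Fin d => ∑ ℓ, wv (u ℓ)) z)
            + ((fun u : Fin m → Fin d => ∏ k, rv (u k)) x
                - (fun u : Fin m → Fin d => ∏ k, rv (u k)) y)
              * ((fun u : Fin m → Fin d => ∑ ℓ, wv (u ℓ)) y
                - (fun u : Fin m → Fin d => ∑ ℓ, wv (u ℓ)) x) :=
            swap_sum_decomp (fun u : Fin m → Fin d => ∏ k, rv (u k))
              (fun u : Fin m → Fin d => ∑ ℓ, wv (u ℓ)) x y hxyne
        _ = (∑ z : Fin m → Fin d, (∏ k, rv (z k)) * (∑ ℓ, wv (z ℓ)))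
            + ((∏ k, rv (x k)) - ∏ k, rv (y k))
              * ((∑ ℓ, wv (y ℓ)) - ∑ ℓ, wv (x ℓ)) := rfl
        _ = (m : ℝ) * M + ((∏ k, rv (x k)) - ∏ k, rv (y k))
              * ((∑ ℓ, wv (y ℓ)) - ∑ ℓ, wv (x ℓ)) := by
            rw [sum_qE rv wv hrv1, hrvM]
    rw [hval, hTM] at h1
    have h5 : 0 < (∑ ℓ, wv (y ℓ)) - (∑ ℓ, wv (x ℓ)) := sub_pos.mpr hxy
    nlinarith [h1, h5]
  -- w is not constant
  have hwnc : ∃ j k, wv j ≠ wv k := by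
    by_contra hc
    push_neg at hc
    apply hWscalar
    refine ⟨wv ⟨0, hd⟩, ?_⟩
    rw [hWspec]
    have h1 : (fun i => (wv i : ℂ)) = fun _ => (wv ⟨0, hd⟩ : ℂ) := by
      funext i
      rw [hc i ⟨0, hd⟩]
    rw [h1]
    have h2 : diagonal (fun _ : Fin d => (wv ⟨0, hd⟩ : ℂ))
        = (wv ⟨0, hd⟩ : ℂ) • (1 : Matrix (Fin d) (Fin d) ℂ) := by
      ext i j
      by_cases h : i = j
      · subst h
        simp
      · simp [Matrix.diagonal_apply_ne _ h, Matrix.one_apply_ne h]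
    rw [h2, Matrix.mul_smul, Matrix.smul_mul, Matrix.mul_one, hVwc']
  -- Gibbs form of the spectrum
  obtain ⟨β, c, hβ, hc, hGibbs⟩ := gibbs_of_passive hd rv wv hrvpos hwnc hPassive
  have hpvG : ∀ i, pv i = c * Real.exp (-β * wv (σs i)) := by
    intro i
    have h := hGibbs (σs i)
    rw [hrvdef] at h
    simpa using h
  set Z : ℝ := ∑ j, Real.exp (-β * wv j) with hZdef
  have hZpos : 0 < Z :=
    Finset.sum_pos (fun j _ => Real.exp_pos _) ⟨⟨0, hd⟩, Finset.mem_univ _⟩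
  have hcZ : c * Z = 1 := by
    rw [hZdef, Finset.mul_sum, ← hrv1]
    exact Finset.sum_congr rfl fun j _ => (hGibbs j).symm
  have hcZ' : c = Z⁻¹ := by
    field_simp
    linarith [hcZ]
  rcases eq_or_lt_of_le hβ with hβ0 | hβpos
  · -- β = 0 : maximally mixed state
    have hZd : Z = d := by
      rw [hZdef, ← hβ0]
      simp
    have hpvc : ∀ i, pv i = c := by
      intro i
      rw [hpvG i, ← hβ0]
      simp
    have hρc : ρ = (c : ℂ) • 1 := by
      rw [hρspec]
      have h1 : (fun i => (pv i : ℂ)) = fun _ => (c : ℂ) := by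
        funext i
        rw [hpvc i]
      rw [h1]
      have h2 : diagonal (fun _ : Fin d => (c : ℂ)) = (c : ℂ) • (1 : Matrix (Fin d) (Fin d) ℂ) := by
        ext i j
        by_cases h : i = j
        · subst h
          simp
        · simp [Matrix.diagonal_apply_ne _ h, Matrix.one_apply_ne h]
      rw [h2, Matrix.mul_smul, Matrix.smul_mul, Matrix.mul_one, hVρc']
    refine hρne 0 le_rfl ?_
    have hW0 : -((0:ℝ) : ℂ) • W = 0 := by
      simp
    rw [hW0, matExp_zero, Matrix.trace_one]
    rw [hρc]
    congr 1
    rw [hcZ', hZd]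
    push_cast
    simp
  · -- β > 0 : thermal state
    have hlogp : ∀ i, Real.log (pv i) = Real.log c + (-β * wv (σs i)) := by
      intro i
      rw [hpvG i, Real.log_mul hc.ne' (Real.exp_pos _).ne', Real.log_exp]
    have hlogr : ∀ j, Real.log (rv j) = Real.log c + (-β * wv j) := by
      intro j
      rw [hGibbs j, Real.log_mul hc.ne' (Real.exp_pos _).ne', Real.log_exp]
    have hrel : ∀ i j, Real.log (pv i) - Real.log (rv j) = β * (wv j - wv (σs i)) := by
      intro i j
      rw [hlogp i, hlogr j]
      ring
    have hsupp := equality_support pv rv wv (fun i => wv (σs i))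
      (fun i j => Complex.normSq ((Vρᴴ * Vw) i j)) hpv hrvpos
      (fun i j => Complex.normSq_nonneg _) hBrow hBcol β hβpos hrel (by rw [← hTdef, hTM, hMdef])
      hpv1 hrv1
    -- diagonal intertwining
    have hDC : diagonal (fun i => (pv i : ℂ)) * (Vρᴴ * Vw)
        = (Vρᴴ * Vw) * diagonal (fun j => (rv j : ℂ)) := by
      ext i j
      rw [Matrix.diagonal_mul, Matrix.mul_diagonal]
      by_cases hCij : (Vρᴴ * Vw) i j = 0
      · rw [hCij]
        ring
      · have hB : Complex.normSq ((Vρᴴ * Vw) i j) ≠ 0 := by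
          simpa [Complex.normSq_eq_zero] using hCij
        rw [hsupp i j hB]
        ring
    have hρVw : ρ * Vw = Vw * diagonal (fun j => (rv j : ℂ)) := by
      rw [hρspec]
      calc Vρ * diagonal (fun i => (pv i : ℂ)) * Vρᴴ * Vw
          = Vρ * (diagonal (fun i => (pv i : ℂ)) * (Vρᴴ * Vw)) := by
            simp only [mul_assoc]
        _ = Vρ * ((Vρᴴ * Vw) * diagonal (fun j => (rv j : ℂ))) := by rw [hDC]
        _ = (Vρ * Vρᴴ) * (Vw * diagonal (fun j => (rv j : ℂ))) := by
            simp only [mul_assoc]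
        _ = Vw * diagonal (fun j => (rv j : ℂ)) := by rw [hVρc', one_mul]
    have hρfin : ρ = Vw * diagonal (fun j => (rv j : ℂ)) * Vwᴴ := by
      calc ρ = ρ * (Vw * Vwᴴ) := by rw [hVwc', mul_one]
        _ = (ρ * Vw) * Vwᴴ := by rw [mul_assoc]
        _ = Vw * diagonal (fun j => (rv j : ℂ)) * Vwᴴ := by rw [hρVw]
    -- compute the thermal state
    have hsmul : -(β : ℂ) • W = Vw * diagonal (fun j => -(β : ℂ) * (wv j : ℂ)) * Vwᴴ := by
      rw [hWspec]
      have h1 : diagonal (fun j => -(β : ℂ) * (wv j : ℂ))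
          = (-(β : ℂ)) • diagonal (fun i => (wv i : ℂ)) := by
        rw [← Matrix.diagonal_smul]
        congr 1
      rw [h1, Matrix.mul_smul, Matrix.smul_mul]
    have hmexp : matExp (-(β : ℂ) • W)
        = Vw * diagonal (fun j => Complex.exp (-(β : ℂ) * (wv j : ℂ))) * Vwᴴ := by
      rw [hsmul, matExp_conj_diag Vw hVwU]
    have hexpR : ∀ j, Complex.exp (-(β : ℂ) * (wv j : ℂ)) = ((Real.exp (-β * wv j) : ℝ) : ℂ) := by
      intro j
      rw [Complex.ofReal_exp]
      push_cast
      ring_nf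
    have htr : Matrix.trace (matExp (-(β : ℂ) • W)) = ((Z : ℝ) : ℂ) := by
      rw [hmexp, Matrix.trace_mul_comm, ← mul_assoc, hVwc, one_mul, Matrix.trace_diagonal]
      rw [hZdef, Complex.ofReal_sum]
      exact Finset.sum_congr rfl fun j _ => (hexpR j).symm ▸ (hexpR j)
    refine hρne β hβpos.le ?_
    rw [htr, hmexp, hρfin]
    have hZC : ((Z : ℝ) : ℂ) ≠ 0 := by
      exact_mod_cast hZpos.ne'
    have hdiag : ((Z : ℝ) : ℂ)⁻¹ • diagonal (fun j => Complex.exp (-(β : ℂ) * (wv j : ℂ)))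
        = diagonal (fun j => (rv j : ℂ)) := by
      rw [← Matrix.diagonal_smul]
      have harg : ((Z : ℝ) : ℂ)⁻¹ • (fun j => Complex.exp (-(β : ℂ) * (wv j : ℂ)))
          = fun j => ((rv j : ℝ) : ℂ) := by
        funext j
        rw [Pi.smul_apply, smul_eq_mul, hexpR j]
        rw [show ((Z : ℝ) : ℂ)⁻¹ = ((Z⁻¹ : ℝ) : ℂ) from by push_cast; ring]
        rw [← Complex.ofReal_mul]
        congr 1
        rw [← hcZ', ← hGibbs j]
      rw [harg]
    calc Vw * diagonal (fun j => (rv j : ℂ)) * Vwᴴ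
        = Vw * (((Z : ℝ) : ℂ)⁻¹ • diagonal (fun j => Complex.exp (-(β : ℂ) * (wv j : ℂ)))) * Vwᴴ := by
          rw [hdiag]
      _ = ((Z : ℝ) : ℂ)⁻¹ • (Vw * diagonal (fun j => Complex.exp (-(β : ℂ) * (wv j : ℂ))) * Vwᴴ) := by
          rw [Matrix.mul_smul, Matrix.smul_mul]
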